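/- Let L(z) = z²I + ziR - A*A with dom(L(z)) = dom(A*A) for z ∈ ℂ, and define E(z) = ((-zI - iR, -iI),(I, 0)) and F(z) = ((I, 0),(-zI, iI)) as 2×2 block operators. Then (L(z) ⊕ I) ∘ F(z) = E(z) ∘ (iG_{A,R} - zI) on dom(A*A) ⊕ dom(A); in particular iG_{A,R} is a global linearization of the quadratic pencil L(·). -/

import Mathlib

/-- Let `L(z) = z²I + ziR - A*A` with `dom(L(z)) = dom(A*A)`, and
define the block operators `E(z) = ((-zI - iR, -iI), (I, 0))` and
`F(z) = ((I, 0), (-zI, iI))`.  Then `(L(z) ⊕ I) ∘ F(z) = E(z) ∘ (iG_{A,R} - zI)` on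
`dom(A*A) ⊕ dom(A)`; in particular `iG_{A,R}` is a global linearization of the
quadratic pencil `L(·)`.  Below, the left-hand side `(L(z) ⊕ I)(F(z)(u,v))` and the
right-hand side `E(z)((iG_{A,R} - z)(u,v))` are written out explicitly. -/
theorem stmt_5 {H : Type*} [NormedAddCommGroup H] [InnerProductSpace ℂ H] [CompleteSpace H]
    (domA domAs : Submodule ℂ H) (A As : H →ₗ[ℂ] H) (R : H →L[ℂ] H)
    (hdense : Dense (domA : Set H))
    (hclosed : IsClosed {p : H × H | p.1 ∈ domA ∧ p.2 = A p.1})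
    (hadj : ∀ u ∈ domA, ∀ v ∈ domAs, (inner ℂ (As v) u : ℂ) = inner ℂ v (A u))
    (ε : ℝ) (hε : 0 < ε)
    (hcoer : ∀ u ∈ domA, ε * ‖u‖ ^ 2 ≤ ‖A u‖ ^ 2)
    (z : ℂ) (u v : H) (hu : u ∈ domA) (huA : A u ∈ domAs) (hv : v ∈ domA) :
    -- (L(z) ⊕ I) (F(z) (u, v)) where F(z)(u,v) = (u, -z•u + i•v) :
    (z ^ 2 • u + z • (Complex.I • R u) - As (A u), (-z) • u + Complex.I • v)
      -- E(z) ((iG_{A,R} - z)(u, v)) where (iG-z)(u,v) = (i•v - z•u, i•(-A*Au - Rv) - z•v) :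
      = ((-z) • (Complex.I • v - z • u) - Complex.I • R (Complex.I • v - z • u)
            - Complex.I • (Complex.I • (-(As (A u)) - R v) - z • v),
         Complex.I • v - z • u) := by
  have h := Complex.I_sq
  refine Prod.ext ?_ ?_ <;> simp [map_sub, map_smul, smul_sub, smul_smul, sub_eq_add_neg] <;> module
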